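/- Let (M,g) be a closed n-manifold and suppose R(x,t) is a smooth function on M × [0,T] satisfying ∂R/∂t = ΔR + 2|Ric|² + (2/n)R̄² - ⟨∇f, ∇R⟩ for smooth f, where the zeroth-order terms are nonnegative and include (2/n)R² with R the function itself. If ∫_M R dvol = 0 at each time and R is not identically 0, then R_min < 0 leads to a contradiction with the minimum principle; hence R ≡ 0. -/

import Mathlib

open MeasureTheory

/- STATEMENT 5: On a closed n-manifold, suppose R satisfies pointwise
∇²R + 2|A|² + 2|B|² + (2/n)R² = ⟨∇f, ∇R⟩ (the nonnegative zeroth-order terms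
2|A|² + 2|B|² are collected into a function a ≥ 0), and ∫_M R dvol = 0.
Then R ≡ 0: if R_min < 0 one gets a contradiction with the minimum principle.

The closed manifold M is modelled as a compact topological space carrying its
volume measure μ (nonzero, positive on nonempty open sets); `Lap x` denotes
∇²R(x) and `gradTerm x` denotes ⟨∇f, ∇R⟩(x).  The minimum principle is the
context fact that at a point minimizing R one has ∇²R ≥ 0 and ∇R = 0. -/

theorem scalar_curvature_vanishes
    {M : Type*} [TopologicalSpace M] [CompactSpace M] [Nonempty M]
    [MeasurableSpace M] [OpensMeasurableSpace M]
    (μ : Measure M) [IsFiniteMeasure μ] (hμ : μ ≠ 0)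
    -- the volume measure is positive on nonempty open sets
    (hμpos : ∀ U : Set M, IsOpen U → U.Nonempty → μ U ≠ 0)
    (n : ℕ) (hn : 0 < n)
    (R a Lap gradTerm : M → ℝ)
    (hRcont : Continuous R)
    -- the zeroth order terms 2|A|² + 2|B|² are nonnegative
    (ha : ∀ x, 0 ≤ a x)
    -- the pointwise equation ∇²R + 2|A|² + 2|B|² + (2/n) R² = ⟨∇f, ∇R⟩
    (heq : ∀ x, Lap x + a x + (2 / (n : ℝ)) * (R x) ^ 2 = gradTerm x)
    -- minimum principle: at a minimum point of R, ∇²R ≥ 0 and ⟨∇f, ∇R⟩ = 0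
    (hmin : ∀ x, (∀ y, R x ≤ R y) → 0 ≤ Lap x ∧ gradTerm x = 0)
    -- the integral of R over M vanishes
    (hint : ∫ x, R x ∂μ = 0) :
    ∀ x, R x = 0 := by
  -- Step 1: R attains a minimum
  obtain ⟨x0, -, hx0'⟩ := isCompact_univ.exists_isMinOn Set.univ_nonempty hRcont.continuousOn
  have hx0 : ∀ y, R x0 ≤ R y := fun y => hx0' (Set.mem_univ y)
  obtain ⟨hLap, hgrad⟩ := hmin x0 hx0
  -- Step 2: at the minimum, (2/n) R(x0)^2 ≤ 0, so R(x0) = 0, hence R ≥ 0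
  have hsq : (2 / (n : ℝ)) * (R x0) ^ 2 ≤ 0 := by
    have := heq x0
    nlinarith [ha x0]
  have hnpos : (0:ℝ) < 2 / (n : ℝ) := by positivity
  have h2 : R x0 ^ 2 ≤ 0 := by
    by_contra h
    push_neg at h
    exact absurd hsq (not_le.mpr (mul_pos hnpos h))
  have hR0 : R x0 = 0 := by
    have := le_antisymm h2 (sq_nonneg (R x0))
    exact pow_eq_zero_iff (two_ne_zero) |>.mp this
  have hRnonneg : ∀ x, 0 ≤ R x := fun x => hR0 ▸ hx0 x
  -- Step 3: integral zero and R ≥ 0 imply R = 0 a.e.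
  have hRint : Integrable R μ := hRcont.integrable_of_hasCompactSupport
    (HasCompactSupport.of_compactSpace R)
  have hae : R =ᵐ[μ] 0 := by
    rw [← integral_eq_zero_iff_of_nonneg hRnonneg hRint]
    exact hint
  -- Step 4: continuity + positivity of μ on opens gives R = 0 everywhere
  intro x
  by_contra hx
  have hpos : 0 < R x := lt_of_le_of_ne (hRnonneg x) (Ne.symm hx)
  set U := {y | 0 < R y} with hU
  have hUopen : IsOpen U := isOpen_lt continuous_const hRcont
  have hUnull : μ U = 0 := by
    have : U ⊆ {y | R y ≠ 0} := fun y hy => ne_of_gt hy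
    exact measure_mono_null this (by simpa [Filter.EventuallyEq, ae_iff] using hae)
  exact hμpos U hUopen ⟨x, hpos⟩ hUnull
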